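/- Let p be a positive integer and let G be a bipartite graph with bipartition (A, B). Let d_A, d_B denote the average degrees of vertices in A and in B, respectively, and suppose d_A, d_B ≥ 8p. Then the number of paths of length 2p+1 in G is at least (1/2^{6p+1})·e(G)·(d_A·d_B)^p. -/

import Mathlib

/-- `S` is the edge set of a path of length `ℓ` in `G`: there are distinct vertices
`v 0, …, v ℓ` with consecutive vertices adjacent, and `S` consists of the `ℓ` edges. -/
def IsPathEdges {V : Type*} (G : SimpleGraph V) (ℓ : ℕ) (S : Set (Sym2 V)) : Prop :=
  ∃ v : ℕ → V, Set.InjOn v (Set.Iic ℓ) ∧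
    (∀ i < ℓ, G.Adj (v i) (v (i + 1))) ∧
    S = (fun i => s(v i, v (i + 1))) '' Set.Iio ℓ

/-- The number of paths of length `ℓ` in `G` (counted as unordered subgraphs, i.e. by their
edge sets). -/
noncomputable def pathCount {V : Type*} (G : SimpleGraph V) (ℓ : ℕ) : ℕ :=
  Set.ncard {S : Set (Sym2 V) | IsPathEdges G ℓ S}

open scoped Classical

namespace PCP
set_option linter.unusedSectionVars false
set_option linter.unusedVariables false
variable {V : Type*} [Fintype V]

noncomputable def degS (G : SimpleGraph V) (S : Finset V) (u : V) : ℕ :=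
  (S.filter fun w => G.Adj u w).card

noncomputable def ES (G : SimpleGraph V) (S : Finset V) : ℕ :=
  (G.edgeFinset.filter fun e => ∀ x ∈ e, x ∈ S).card

lemma ES_univ (G : SimpleGraph V) : ES G Finset.univ = G.edgeFinset.card := by
  unfold ES
  rw [Finset.filter_true_of_mem]
  intro e _ x _
  exact Finset.mem_univ x


lemma ES_erase (G : SimpleGraph V) (S : Finset V) (v : V) :
    ES G S ≤ ES G (S.erase v) + degS G S v := by
  classical
  unfold ES degS
  set T := G.edgeFinset.filter fun e => ∀ x ∈ e, x ∈ S with hT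
  have hsplit := Finset.card_filter_add_card_filter_not (s := T) (p := fun e => v ∉ e)
  simp only [not_not] at hsplit
  rw [← hsplit]
  gcongr
  · -- edges not containing v are edges of erase
    intro e he
    simp only [Finset.mem_filter, hT] at he ⊢
    obtain ⟨⟨he1, he2⟩, he3⟩ := he
    exact ⟨he1, fun x hx => Finset.mem_erase.mpr ⟨fun h => he3 (h ▸ hx), he2 x hx⟩⟩
  · -- edges containing v inject into neighbors of v in S
    apply Finset.card_le_card_of_injOn
      (fun e => if h : v ∈ e then Sym2.Mem.other' h else v)
    · intro e he
      simp only [Finset.mem_coe, Finset.mem_filter, hT] at he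
      obtain ⟨⟨he1, he2⟩, he3⟩ := he
      simp only [he3, dif_pos]
      refine Finset.mem_filter.mpr ⟨he2 _ (Sym2.other_mem' he3), ?_⟩
      rw [← SimpleGraph.mem_edgeSet, Sym2.other_spec' he3]
      exact (SimpleGraph.mem_edgeFinset).mp he1
    · intro e1 h1 e2 h2 heq
      simp only [Finset.mem_coe, Finset.mem_filter, hT] at h1 h2
      have hv1 : v ∈ e1 := h1.2
      have hv2 : v ∈ e2 := h2.2
      simp only [dif_pos hv1, dif_pos hv2] at heq
      rw [← Sym2.other_spec' hv1, ← Sym2.other_spec' hv2, heq]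

lemma cleaning (G : SimpleGraph V) (A B : Set V) (hdisj : Disjoint A B)
    (dA dB : ℝ) (hdA : 0 ≤ dA) (hdB : 0 ≤ dB) :
    ∃ S : Finset V,
      ((G.edgeFinset.card : ℝ) - dA / 4 * A.ncard - dB / 4 * B.ncard ≤ (ES G S : ℝ)) ∧
      (∀ v ∈ S, v ∈ A → dA / 4 ≤ (degS G S v : ℝ)) ∧
      (∀ v ∈ S, v ∈ B → dB / 4 ≤ (degS G S v : ℝ)) := by
  classical
  set good : Finset V → Prop := fun S =>
    (G.edgeFinset.card : ℝ) - dA / 4 * ((A.toFinset \ S).card) - dB / 4 * ((B.toFinset \ S).card)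
      ≤ (ES G S : ℝ) with hgood
  have hguniv : good Finset.univ := by
    have h0 : ∀ C : Finset V, C \ Finset.univ = ∅ := fun C => by
      ext x; simp
    simp only [hgood, ES_univ, h0, Finset.card_empty, Nat.cast_zero, mul_zero, sub_zero, le_refl]
  obtain ⟨S, hSmem, hSmin⟩ := Finset.exists_min_image
    ((Finset.univ : Finset (Finset V)).filter good) Finset.card
    ⟨Finset.univ, by simp [hguniv]⟩
  have hSgood : good S := (Finset.mem_filter.mp hSmem).2
  -- min degree claims
  have key : ∀ (v : V) (d : ℝ) (C : Set V), v ∈ S → v ∈ C →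
      (∀ T : Finset V, (C.toFinset \ T).card ≤ (A.toFinset \ T).card + (B.toFinset \ T).card) →
      True := fun _ _ _ _ _ _ => trivial
  have step : ∀ v ∈ S, ((v ∈ A ∧ (degS G S v : ℝ) < dA / 4) ∨
      (v ∈ B ∧ (degS G S v : ℝ) < dB / 4)) → False := by
    intro v hvS hcase
    have hgooderase : good (S.erase v) := by
      have hES := ES_erase G S v
      rcases hcase with ⟨hvA, hdeg⟩ | ⟨hvB, hdeg⟩
      · have hA' : ((A.toFinset \ S.erase v).card : ℝ) = (A.toFinset \ S).card + 1 := by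
          have : A.toFinset \ S.erase v = insert v (A.toFinset \ S) := by
            ext x
            simp only [Finset.mem_sdiff, Finset.mem_erase, Finset.mem_insert, Set.mem_toFinset]
            constructor
            · rintro ⟨hx, hx2⟩
              by_cases h : x = v
              · exact Or.inl h
              · exact Or.inr ⟨hx, fun hs => hx2 ⟨h, hs⟩⟩
            · rintro (rfl | ⟨hx, hx2⟩)
              · exact ⟨by simpa using hvA, fun h => h.1 rfl⟩
              · exact ⟨hx, fun h => hx2 h.2⟩
          rw [this, Finset.card_insert_of_notMem (by simp [hvS])]
          push_cast; ring
        have hB' : (B.toFinset \ S.erase v) = (B.toFinset \ S) := by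
          ext x
          simp only [Finset.mem_sdiff, Finset.mem_erase, Set.mem_toFinset]
          constructor
          · rintro ⟨hx, hx2⟩
            refine ⟨hx, fun hs => hx2 ⟨fun h => ?_, hs⟩⟩
            subst h
            exact (Set.disjoint_left.mp hdisj hvA) hx
          · rintro ⟨hx, hx2⟩
            exact ⟨hx, fun h => hx2 h.2⟩
        simp only [hgood] at hSgood ⊢
        rw [hA', hB']
        have : (ES G S : ℝ) ≤ (ES G (S.erase v) : ℝ) + degS G S v := by exact_mod_cast hES
        nlinarith [hSgood]
      · have hA' : (A.toFinset \ S.erase v) = (A.toFinset \ S) := by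
          ext x
          simp only [Finset.mem_sdiff, Finset.mem_erase, Set.mem_toFinset]
          constructor
          · rintro ⟨hx, hx2⟩
            refine ⟨hx, fun hs => hx2 ⟨fun h => ?_, hs⟩⟩
            subst h
            exact (Set.disjoint_left.mp hdisj hx) hvB
          · rintro ⟨hx, hx2⟩
            exact ⟨hx, fun h => hx2 h.2⟩
        have hB' : ((B.toFinset \ S.erase v).card : ℝ) = (B.toFinset \ S).card + 1 := by
          have : B.toFinset \ S.erase v = insert v (B.toFinset \ S) := by
            ext x
            simp only [Finset.mem_sdiff, Finset.mem_erase, Finset.mem_insert, Set.mem_toFinset]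
            constructor
            · rintro ⟨hx, hx2⟩
              by_cases h : x = v
              · exact Or.inl h
              · exact Or.inr ⟨hx, fun hs => hx2 ⟨h, hs⟩⟩
            · rintro (rfl | ⟨hx, hx2⟩)
              · exact ⟨by simpa using hvB, fun h => h.1 rfl⟩
              · exact ⟨hx, fun h => hx2 h.2⟩
          rw [this, Finset.card_insert_of_notMem (by simp [hvS])]
          push_cast; ring
        simp only [hgood] at hSgood ⊢
        rw [hA', hB']
        have : (ES G S : ℝ) ≤ (ES G (S.erase v) : ℝ) + degS G S v := by exact_mod_cast hES
        nlinarith [hSgood]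
    have hlt : (S.erase v).card < S.card := Finset.card_erase_lt_of_mem hvS
    have := hSmin (S.erase v) (Finset.mem_filter.mpr ⟨Finset.mem_univ _, hgooderase⟩)
    omega
  refine ⟨S, ?_, ?_, ?_⟩
  · -- edge count bound
    have h1 : ((A.toFinset \ S).card : ℝ) ≤ A.ncard := by
      rw [Set.ncard_eq_toFinset_card']
      exact_mod_cast Finset.card_le_card (Finset.sdiff_subset)
    have h2 : ((B.toFinset \ S).card : ℝ) ≤ B.ncard := by
      rw [Set.ncard_eq_toFinset_card']
      exact_mod_cast Finset.card_le_card (Finset.sdiff_subset)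
    simp only [hgood] at hSgood
    nlinarith
  · intro v hv hvA
    by_contra h
    exact step v hv (Or.inl ⟨hvA, by linarith [not_le.mp h]⟩)
  · intro v hv hvB
    by_contra h
    exact step v hv (Or.inr ⟨hvB, by linarith [not_le.mp h]⟩)

noncomputable def pad (p : ℕ) (q : Fin (2*p+2) → V) (n : ℕ) : V :=
  q ⟨min n (2*p+1), by omega⟩

lemma pad_eq (p : ℕ) (q : Fin (2*p+2) → V) (n : ℕ) (h : n ≤ 2*p+1) :
    pad p q n = q ⟨n, by omega⟩ := by
  unfold pad
  congr 1
  exact Fin.ext (min_eq_left h)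

lemma pad_fin (p : ℕ) (q : Fin (2*p+2) → V) (j : Fin (2*p+2)) :
    pad p q (j : ℕ) = q j := by
  rw [pad_eq p q _ (by omega)]

noncomputable def P (G : SimpleGraph V) (A : Set V) (S : Finset V) (p k : ℕ) :
    Finset (Fin (2*p+2) → V) :=
  Finset.univ.filter fun q =>
    Set.InjOn (pad p q) (Set.Iic k) ∧
    (∀ i < k, G.Adj (pad p q i) (pad p q (i+1))) ∧
    (∀ i ≤ k, pad p q i ∈ S) ∧
    pad p q 0 ∈ A ∧
    (∀ j, k ≤ j → pad p q j = pad p q k)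

lemma mem_P (G : SimpleGraph V) (A : Set V) (S : Finset V) (p k : ℕ)
    (q : Fin (2*p+2) → V) :
    q ∈ P G A S p k ↔
      Set.InjOn (pad p q) (Set.Iic k) ∧
      (∀ i < k, G.Adj (pad p q i) (pad p q (i+1))) ∧
      (∀ i ≤ k, pad p q i ∈ S) ∧
      pad p q 0 ∈ A ∧
      (∀ j, k ≤ j → pad p q j = pad p q k) := by
  unfold P
  simp only [Finset.mem_filter, Finset.mem_univ, true_and]

/-- alternation along paths -/
lemma alt (G : SimpleGraph V) (A B : Set V) (S : Finset V)
    (hdisj : Disjoint A B)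
    (hbip : ∀ u w : V, G.Adj u w → (u ∈ A ∧ w ∈ B) ∨ (u ∈ B ∧ w ∈ A))
    (p k : ℕ) (q : Fin (2*p+2) → V) (hq : q ∈ P G A S p k) :
    ∀ i ≤ k, (Even i → pad p q i ∈ A) ∧ (¬ Even i → pad p q i ∈ B) := by
  obtain ⟨hinj, hadj, hS, hA0, htail⟩ := (mem_P G A S p k q).mp hq
  intro i
  induction i with
  | zero => intro _; exact ⟨fun _ => hA0, fun h => absurd (Even.zero) h⟩
  | succ n ih =>
    intro hn
    have hprev := ih (by omega)
    have hadjn := hadj n (by omega)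
    rcases hbip _ _ hadjn with ⟨h1, h2⟩ | ⟨h1, h2⟩
    · -- pad n ∈ A, pad (n+1) ∈ B : n must be even
      constructor
      · intro hev
        -- n+1 even means n odd, so pad n ∈ B, contradiction with h1 ∈ A
        exfalso
        have hodd : ¬ Even n := by
          rw [Nat.even_add_one] at hev; exact hev
        exact Set.disjoint_left.mp hdisj h1 (hprev.2 hodd)
      · intro _; exact h2
    · constructor
      · intro _; exact h2
      · intro hnev
        exfalso
        have hev : Even n := by
          rw [Nat.even_add_one] at hnev; exact not_not.mp hnev
        exact Set.disjoint_left.mp hdisj (hprev.1 hev) h1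

/-- base case: edges in S give paths of length 1 -/
lemma base (G : SimpleGraph V) (A B : Set V) (S : Finset V)
    (hbip : ∀ u w : V, G.Adj u w → (u ∈ A ∧ w ∈ B) ∨ (u ∈ B ∧ w ∈ A)) (p : ℕ) :
    ES G S ≤ (P G A S p 1).card := by
  unfold ES
  apply Finset.card_le_card_of_surjOn (fun q => s(pad p q 0, pad p q 1))
  intro e he
  simp only [Finset.coe_filter, Set.mem_setOf_eq, SimpleGraph.mem_edgeFinset] at he
  obtain ⟨he1, he2⟩ := he
  induction e using Sym2.ind with
  | _ u w =>
    have hadj : G.Adj u w := he1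
    have huS : u ∈ S := he2 u (by simp)
    have hwS : w ∈ S := he2 w (by simp)
    -- wlog u ∈ A
    have main : ∀ u w : V, G.Adj u w → u ∈ S → w ∈ S → u ∈ A →
        s(u, w) ∈ (fun q => s(pad p q 0, pad p q 1)) '' ↑(P G A S p 1) := by
      intro u w hadj huS hwS huA
      set q : Fin (2*p+2) → V := fun j => if (j : ℕ) = 0 then u else w with hqdef
      have hp0 : pad p q 0 = u := by
        rw [pad_eq _ _ _ (by omega)]
        simp [hqdef]
      have hpn : ∀ n, 1 ≤ n → pad p q n = w := by
        intro n hn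
        unfold pad
        have h : min n (2*p+1) ≠ 0 := by omega
        simp [hqdef, h]
      refine ⟨q, ?_, by simp only []; rw [hp0, hpn 1 le_rfl]⟩
      simp only [Finset.mem_coe, mem_P]
      refine ⟨?_, ?_, ?_, ?_, ?_⟩
      · intro a ha b hb hab
        simp only [Set.mem_Iic] at ha hb
        have ha' : a = 0 ∨ a = 1 := by omega
        have hb' : b = 0 ∨ b = 1 := by omega
        rcases ha' with rfl | rfl <;> rcases hb' with rfl | rfl
        · rfl
        · exact absurd (by rw [hp0, hpn 1 le_rfl] at hab; exact hab) hadj.ne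
        · exact absurd (by rw [hp0, hpn 1 le_rfl] at hab; exact hab.symm) hadj.ne
        · rfl
      · intro i hi
        have : i = 0 := by omega
        subst this
        rw [hp0, hpn 1 le_rfl]
        exact hadj
      · intro i hi
        have : i = 0 ∨ i = 1 := by omega
        rcases this with rfl | rfl
        · rw [hp0]; exact huS
        · rw [hpn 1 le_rfl]; exact hwS
      · rw [hp0]; exact huA
      · intro j hj
        rw [hpn j hj, hpn 1 le_rfl]
    rcases hbip u w hadj with ⟨h1, _⟩ | ⟨_, h2⟩
    · exact main u w hadj huS hwS h1
    · have := main w u hadj.symm hwS huS h2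
      rw [Sym2.eq_swap] at this
      exact this

noncomputable def extq (p k : ℕ) (q : Fin (2*p+2) → V) (w : V) : Fin (2*p+2) → V :=
  fun j => if (j : ℕ) ≤ k then q j else w

noncomputable def Wset (G : SimpleGraph V) (S : Finset V) (p k : ℕ)
    (q : Fin (2*p+2) → V) : Finset V :=
  (S.filter fun w => G.Adj (pad p q k) w) \ ((Finset.range (k+1)).image (pad p q))

lemma pad_extq_le (p k : ℕ) (hk : k ≤ 2*p+1) (q : Fin (2*p+2) → V) (w : V)
    (n : ℕ) (hn : n ≤ k) : pad p (extq p k q w) n = pad p q n := by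
  rw [pad_eq _ _ _ (le_trans hn hk), pad_eq _ _ _ (le_trans hn hk)]
  unfold extq
  simp [hn]

lemma pad_extq_gt (p k : ℕ) (hk : k < 2*p+1) (q : Fin (2*p+2) → V) (w : V)
    (n : ℕ) (hn : k < n) : pad p (extq p k q w) n = w := by
  unfold pad extq
  simp only [Fin.val_mk]
  rw [if_neg (by omega)]

lemma step (G : SimpleGraph V) (A B : Set V) (S : Finset V)
    (hdisj : Disjoint A B)
    (hbip : ∀ u w : V, G.Adj u w → (u ∈ A ∧ w ∈ B) ∨ (u ∈ B ∧ w ∈ A))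
    (p k : ℕ) (hk : k ≤ 2*p)
    (dA dB : ℝ)
    (hdegA : ∀ v ∈ S, v ∈ A → dA/4 ≤ (degS G S v : ℝ))
    (hdegB : ∀ v ∈ S, v ∈ B → dB/4 ≤ (degS G S v : ℝ))
    (hpA : 8*p ≤ dA) (hpB : 8*p ≤ dB) :
    (if Even k then dA/8 else dB/8) * ((P G A S p k).card : ℝ)
      ≤ ((P G A S p (k+1)).card : ℝ) := by
  classical
  have hcardW : ∀ q ∈ P G A S p k,
      (if Even k then dA/8 else dB/8) ≤ ((Wset G S p k q).card : ℝ) := by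
    intro q hq
    obtain ⟨hinj, hadj, hS, hA0, htail⟩ := (mem_P _ _ _ _ _ _).mp hq
    have halt := alt G A B S hdisj hbip p k q hq
    set Nbrs := S.filter (fun w => G.Adj (pad p q k) w) with hN
    set U := (Finset.range (k+1)).image (pad p q) with hU
    have hsub : Nbrs ⊆ (Nbrs \ U) ∪ ((Finset.range (k+1)).filter
        (fun i => Even i ≠ Even k)).image (pad p q) := by
      intro x hx
      by_cases hxU : x ∈ U
      · apply Finset.mem_union_right
        rw [hU] at hxU
        obtain ⟨i, hi, rfl⟩ := Finset.mem_image.mp hxU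
        refine Finset.mem_image.mpr ⟨i, Finset.mem_filter.mpr ⟨hi, ?_⟩, rfl⟩
        have hiK : i ≤ k := by
          have := Finset.mem_range.mp hi; omega
        have hadjx : G.Adj (pad p q k) (pad p q i) := (Finset.mem_filter.mp hx).2
        rcases hbip _ _ hadjx with ⟨hk1, hi1⟩ | ⟨hk1, hi1⟩
        · have hKE : Even k := by
            by_contra h
            exact Set.disjoint_left.mp hdisj hk1 ((halt k le_rfl).2 h)
          have hIE : ¬ Even i := by
            intro h
            exact Set.disjoint_left.mp hdisj ((halt i hiK).1 h) hi1
          simp [hKE, hIE]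
        · have hKE : ¬ Even k := by
            intro h
            exact Set.disjoint_left.mp hdisj ((halt k le_rfl).1 h) hk1
          have hIE : Even i := by
            by_contra h
            exact Set.disjoint_left.mp hdisj hi1 ((halt i hiK).2 h)
          simp [hKE, hIE]
      · exact Finset.mem_union_left _ (Finset.mem_sdiff.mpr ⟨hx, hxU⟩)
    have hcard1 : Nbrs.card ≤ (Nbrs \ U).card +
        ((Finset.range (k+1)).filter (fun i => Even i ≠ Even k)).card := by
      refine le_trans (Finset.card_le_card hsub) ?_
      refine le_trans (Finset.card_union_le _ _) ?_
      gcongr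
      exact Finset.card_image_le
    have hcard2 : ((Finset.range (k+1)).filter (fun i => Even i ≠ Even k)).card ≤ p := by
      have h := Finset.card_le_card_of_injOn (fun i => i / 2) (s := (Finset.range (k+1)).filter
          (fun i => Even i ≠ Even k)) (t := Finset.range p) ?_ ?_
      · simpa using h
      · intro i hi
        simp only [Finset.coe_filter, Set.mem_setOf_eq, Finset.mem_range, Finset.mem_coe,
          Finset.mem_filter] at hi ⊢
        obtain ⟨hik, hpar⟩ := hi
        have h1 : ¬ (Even i ↔ Even k) := by
          intro h; exact hpar (by simp [h])
        rw [Nat.even_iff, Nat.even_iff] at h1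
        omega
      · intro a ha b hb hab
        simp only [Finset.coe_filter, Set.mem_setOf_eq, Finset.mem_range, Finset.mem_coe,
          Finset.mem_filter] at ha hb
        have h1 : ¬ (Even a ↔ Even k) := by
          intro h; exact ha.2 (by simp [h])
        have h2 : ¬ (Even b ↔ Even k) := by
          intro h; exact hb.2 (by simp [h])
        rw [Nat.even_iff, Nat.even_iff] at h1 h2
        simp only at hab
        omega
    have hdeg : (if Even k then dA/4 else dB/4) ≤ (Nbrs.card : ℝ) := by
      have hNd : Nbrs.card = degS G S (pad p q k) := rfl
      rw [hNd]
      by_cases hKE : Even k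
      · simp only [hKE, if_true]
        exact hdegA _ (hS k le_rfl) ((halt k le_rfl).1 hKE)
      · simp only [hKE, if_false]
        exact hdegB _ (hS k le_rfl) ((halt k le_rfl).2 hKE)
    have hWeq : Wset G S p k q = Nbrs \ U := rfl
    rw [hWeq]
    have h1n : Nbrs.card ≤ (Nbrs \ U).card + p := le_trans hcard1 (by omega)
    have h1 : (Nbrs.card : ℝ) ≤ ((Nbrs \ U).card : ℝ) + p := by exact_mod_cast h1n
    by_cases hKE : Even k
    · simp only [hKE, if_true] at hdeg ⊢
      linarith
    · simp only [hKE, if_false] at hdeg ⊢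
      linarith
  have hext : ∀ q ∈ P G A S p k, ∀ w ∈ Wset G S p k q,
      extq p k q w ∈ P G A S p (k+1) := by
    intro q hq w hw
    obtain ⟨hinj, hadj, hS, hA0, htail⟩ := (mem_P _ _ _ _ _ _).mp hq
    obtain ⟨hwN, hwU⟩ := Finset.mem_sdiff.mp hw
    obtain ⟨hwS, hwadj⟩ := Finset.mem_filter.mp hwN
    have hle : ∀ n ≤ k, pad p (extq p k q w) n = pad p q n :=
      fun n hn => pad_extq_le p k (by omega) q w n hn
    have hgt : ∀ n, k < n → pad p (extq p k q w) n = w :=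
      fun n hn => pad_extq_gt p k (by omega) q w n hn
    rw [mem_P]
    refine ⟨?_, ?_, ?_, ?_, ?_⟩
    · intro a ha b hb hab
      simp only [Set.mem_Iic] at ha hb
      by_cases hak : a ≤ k <;> by_cases hbk : b ≤ k
      · rw [hle a hak, hle b hbk] at hab
        exact hinj (Set.mem_Iic.mpr hak) (Set.mem_Iic.mpr hbk) hab
      · exfalso
        rw [hle a hak, hgt b (by omega)] at hab
        exact hwU (Finset.mem_image.mpr ⟨a, Finset.mem_range.mpr (by omega), hab⟩)
      · exfalso
        rw [hgt a (by omega), hle b hbk] at hab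
        exact hwU (Finset.mem_image.mpr ⟨b, Finset.mem_range.mpr (by omega), hab.symm⟩)
      · omega
    · intro i hi
      rcases Nat.lt_succ_iff_lt_or_eq.mp hi with h | rfl
      · rw [hle i (by omega), hle (i+1) (by omega)]
        exact hadj i h
      · rw [hle i le_rfl, hgt (i+1) (by omega)]
        exact hwadj
    · intro i hi
      by_cases h : i ≤ k
      · rw [hle i h]; exact hS i h
      · have hik : i = k+1 := by omega
        subst hik
        rw [hgt _ (by omega)]; exact hwS
    · rw [hle 0 (by omega)]; exact hA0
    · intro j hj
      rw [hgt j (by omega), hgt (k+1) (by omega)]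
  have hextinj : ∀ q ∈ P G A S p k, Set.InjOn (extq p k q) (Wset G S p k q) := by
    intro q hq w1 h1 w2 h2 heq
    have h := congrArg (fun r => pad p r (k+1)) heq
    rwa [pad_extq_gt p k (by omega) _ _ _ (by omega),
      pad_extq_gt p k (by omega) _ _ _ (by omega)] at h
  have hdisjf : ∀ q1 ∈ P G A S p k, ∀ q2 ∈ P G A S p k, q1 ≠ q2 →
      Disjoint ((Wset G S p k q1).image (extq p k q1))
        ((Wset G S p k q2).image (extq p k q2)) := by
    intro q1 hq1 q2 hq2 hne
    rw [Finset.disjoint_left]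
    intro x hx1 hx2
    obtain ⟨w1, hw1, rfl⟩ := Finset.mem_image.mp hx1
    obtain ⟨w2, hw2, heq⟩ := Finset.mem_image.mp hx2
    apply hne
    obtain ⟨_, _, _, _, htail1⟩ := (mem_P _ _ _ _ _ _).mp hq1
    obtain ⟨_, _, _, _, htail2⟩ := (mem_P _ _ _ _ _ _).mp hq2
    have hagree : ∀ j : Fin (2*p+2), (j : ℕ) ≤ k → q1 j = q2 j := by
      intro j hj
      have h := congrFun heq j
      unfold extq at h
      rw [if_pos hj, if_pos hj] at h
      exact h.symm
    have hk2 : k < 2*p+2 := by omega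
    have hkk : q1 ⟨k, hk2⟩ = q2 ⟨k, hk2⟩ := hagree _ (by simp)
    funext j
    by_cases hj : (j : ℕ) ≤ k
    · exact hagree j hj
    · have h1 : q1 j = q1 ⟨k, hk2⟩ := by
        rw [← pad_fin p q1 j, ← pad_eq p q1 k (by omega)]
        exact htail1 j (by omega)
      have h2 : q2 j = q2 ⟨k, hk2⟩ := by
        rw [← pad_fin p q2 j, ← pad_eq p q2 k (by omega)]
        exact htail2 j (by omega)
      rw [h1, hkk, ← h2]
  have hsubU : (P G A S p k).biUnion (fun q => (Wset G S p k q).image (extq p k q))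
      ⊆ P G A S p (k+1) := by
    intro x hx
    obtain ⟨q, hq, hx⟩ := Finset.mem_biUnion.mp hx
    obtain ⟨w, hw, rfl⟩ := Finset.mem_image.mp hx
    exact hext q hq w hw
  have hbU : ((P G A S p k).biUnion (fun q => (Wset G S p k q).image (extq p k q))).card
      = ∑ q ∈ P G A S p k, ((Wset G S p k q).image (extq p k q)).card :=
    Finset.card_biUnion hdisjf
  have himg : ∀ q ∈ P G A S p k,
      ((Wset G S p k q).image (extq p k q)).card = (Wset G S p k q).card := by
    intro q hq
    exact Finset.card_image_of_injOn (hextinj q hq)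
  calc (if Even k then dA/8 else dB/8) * ((P G A S p k).card : ℝ)
      = ∑ _q ∈ P G A S p k, (if Even k then dA/8 else dB/8) := by
        rw [Finset.sum_const, nsmul_eq_mul]; ring
    _ ≤ ∑ q ∈ P G A S p k, ((Wset G S p k q).card : ℝ) :=
        Finset.sum_le_sum (fun q hq => hcardW q hq)
    _ = (((P G A S p k).biUnion (fun q => (Wset G S p k q).image (extq p k q))).card : ℝ) := by
        rw [hbU]
        push_cast
        exact Finset.sum_congr rfl (fun q hq => by rw [himg q hq])
    _ ≤ _ := by
        exact_mod_cast Finset.card_le_card hsubU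

lemma iterate (G : SimpleGraph V) (A B : Set V) (S : Finset V)
    (hdisj : Disjoint A B)
    (hbip : ∀ u w : V, G.Adj u w → (u ∈ A ∧ w ∈ B) ∨ (u ∈ B ∧ w ∈ A))
    (p : ℕ) (hp : 1 ≤ p) (dA dB : ℝ)
    (hdegA : ∀ v ∈ S, v ∈ A → dA/4 ≤ (degS G S v : ℝ))
    (hdegB : ∀ v ∈ S, v ∈ B → dB/4 ≤ (degS G S v : ℝ))
    (hpA : 8*p ≤ dA) (hpB : 8*p ≤ dB) :
    ∀ j ≤ p, (ES G S : ℝ) * ((dA/8)*(dB/8))^j ≤ ((P G A S p (2*j+1)).card : ℝ) := by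
  have hp1 : (1:ℝ) ≤ (p:ℝ) := by exact_mod_cast hp
  have hdA0 : 0 ≤ dA/8 := by linarith
  have hdB0 : 0 ≤ dB/8 := by linarith
  intro j
  induction j with
  | zero =>
    intro _
    simpa using (by exact_mod_cast base G A B S hbip p : (ES G S : ℝ) ≤ ((P G A S p 1).card : ℝ))
  | succ n ih =>
    intro hn
    have h1 := ih (by omega)
    have s1 := step G A B S hdisj hbip p (2*n+1) (by omega) dA dB hdegA hdegB hpA hpB
    have hodd : ¬ Even (2*n+1) := by
      simp [Nat.even_add_one, parity_simps]
    rw [if_neg hodd] at s1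
    have s2 := step G A B S hdisj hbip p (2*n+2) (by omega) dA dB hdegA hdegB hpA hpB
    have hev : Even (2*n+2) := ⟨n+1, by ring⟩
    rw [if_pos hev] at s2
    have hidx : 2*(n+1)+1 = 2*n+2+1 := by ring
    rw [hidx]
    have t1 : (dB/8)*((ES G S : ℝ) * ((dA/8)*(dB/8))^n) ≤ (dB/8)*((P G A S p (2*n+1)).card : ℝ) :=
      mul_le_mul_of_nonneg_left h1 hdB0
    have t2 : (dB/8)*((ES G S : ℝ) * ((dA/8)*(dB/8))^n) ≤ ((P G A S p (2*n+1+1)).card : ℝ) :=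
      le_trans t1 s1
    have t3 : (dA/8)*((dB/8)*((ES G S : ℝ) * ((dA/8)*(dB/8))^n))
        ≤ (dA/8)*((P G A S p (2*n+2)).card : ℝ) := by
      have : (2*n+1+1) = 2*n+2 := by ring
      rw [this] at t2
      exact mul_le_mul_of_nonneg_left t2 hdA0
    have t4 := le_trans t3 s2
    calc (ES G S : ℝ) * ((dA/8)*(dB/8))^(n+1)
        = (dA/8)*((dB/8)*((ES G S : ℝ) * ((dA/8)*(dB/8))^n)) := by ring
      _ ≤ _ := t4

noncomputable def Phi (p : ℕ) (q : Fin (2*p+2) → V) : Set (Sym2 V) :=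
  (fun i => s(pad p q i, pad p q (i+1))) '' Set.Iio (2*p+1)

lemma phi_inj (G : SimpleGraph V) (A B : Set V) (S : Finset V)
    (hdisj : Disjoint A B)
    (hbip : ∀ u w : V, G.Adj u w → (u ∈ A ∧ w ∈ B) ∨ (u ∈ B ∧ w ∈ A))
    (p : ℕ) (hp : 1 ≤ p) (q r : Fin (2*p+2) → V)
    (hq : q ∈ P G A S p (2*p+1)) (hr : r ∈ P G A S p (2*p+1))
    (heq : Phi p q = Phi p r) : q = r := by
  set L := 2*p+1 with hL
  obtain ⟨hinjq, hadjq, _, hA0q, _⟩ := (mem_P _ _ _ _ _ _).mp hq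
  obtain ⟨hinjr, hadjr, _, hA0r, _⟩ := (mem_P _ _ _ _ _ _).mp hr
  have haltr := alt G A B S hdisj hbip p L r hr
  -- membership in Phi
  have hmemq : ∀ i < L, s(pad p q i, pad p q (i+1)) ∈ Phi p q :=
    fun i hi => ⟨i, Set.mem_Iio.mpr hi, rfl⟩
  have hmemr : ∀ i < L, s(pad p r i, pad p r (i+1)) ∈ Phi p r :=
    fun i hi => ⟨i, Set.mem_Iio.mpr hi, rfl⟩
  -- the only edge of Phi q containing q0 is the first one
  have huniq : ∀ e ∈ Phi p q, pad p q 0 ∈ e → e = s(pad p q 0, pad p q 1) := by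
    intro e he hmem
    obtain ⟨i, hi, rfl⟩ := he
    rw [Set.mem_Iio] at hi
    rcases Sym2.mem_iff.mp hmem with h | h
    · have : (0:ℕ) = i := hinjq (by simp [hL]) (Set.mem_Iic.mpr (by omega)) h
      rw [← this]
    · exfalso
      have : (0:ℕ) = i+1 := hinjq (by simp [hL]) (Set.mem_Iic.mpr (by omega)) h
      omega
  -- first vertices agree
  have h00 : pad p q 0 = pad p r 0 := by
    have h1 : s(pad p q 0, pad p q 1) ∈ Phi p r := heq ▸ hmemq 0 (by omega)
    obtain ⟨j, hj, he⟩ := h1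
    rw [Set.mem_Iio] at hj
    -- q0 = pad r m for some m ≤ L
    have hm : ∃ m ≤ L, pad p q 0 = pad p r m := by
      rcases Sym2.eq_iff.mp he.symm with ⟨h1, _⟩ | ⟨h1, _⟩
      · exact ⟨j, by omega, h1⟩
      · exact ⟨j+1, by omega, h1⟩
    obtain ⟨m, hmL, hqm⟩ := hm
    -- m is even
    have hmev : Even m := by
      by_contra hodd
      have : pad p r m ∈ B := (haltr m hmL).2 hodd
      exact Set.disjoint_left.mp hdisj (hqm ▸ hA0q) this
    -- m = 0
    rcases Nat.eq_zero_or_pos m with rfl | hmpos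
    · rw [hqm]
    exfalso
    -- 0 < m; m even and L odd force m < L
    have hmltL : m < L := by
      rcases hmev with ⟨c, hc⟩
      omega
    obtain ⟨m', rfl⟩ : ∃ m', m = m'+1 := ⟨m-1, by omega⟩
    have he1 : s(pad p r m', pad p r (m'+1)) ∈ Phi p q := heq ▸ hmemr m' (by omega)
    have he2 : s(pad p r (m'+1), pad p r (m'+2)) ∈ Phi p q := heq ▸ hmemr (m'+1) (by omega)
    have hc1 : pad p q 0 ∈ s(pad p r m', pad p r (m'+1)) := by
      rw [hqm]; exact Sym2.mem_mk_right _ _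
    have hc2 : pad p q 0 ∈ s(pad p r (m'+1), pad p r (m'+2)) := by
      rw [hqm]; exact Sym2.mem_mk_left _ _
    have hee : s(pad p r m', pad p r (m'+1)) = s(pad p r (m'+1), pad p r (m'+2)) := by
      rw [huniq _ he1 hc1, huniq _ he2 hc2]
    rcases Sym2.eq_iff.mp hee with ⟨h1, _⟩ | ⟨h1, _⟩
    · have : m' = m'+1 := hinjr (Set.mem_Iic.mpr (by omega)) (Set.mem_Iic.mpr (by omega)) h1
      omega
    · have : m' = m'+2 := hinjr (Set.mem_Iic.mpr (by omega)) (Set.mem_Iic.mpr (by omega)) h1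
      omega
  -- induction along the path
  have key : ∀ i, i ≤ L → pad p q i = pad p r i := by
    intro i
    induction i using Nat.strong_induction_on with
    | _ i ih =>
      intro hiL
      rcases Nat.eq_zero_or_pos i with rfl | hipos
      · exact h00
      obtain ⟨n, rfl⟩ : ∃ n, i = n+1 := ⟨i-1, by omega⟩
      have hn : n < L := by omega
      have he : s(pad p q n, pad p q (n+1)) ∈ Phi p r := heq ▸ hmemq n hn
      obtain ⟨j, hj, hje⟩ := he
      rw [Set.mem_Iio] at hj
      rcases Sym2.eq_iff.mp hje.symm with ⟨h1, h2⟩ | ⟨h1, h2⟩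
      · -- q n = r j, q (n+1) = r (j+1)
        have hrn : pad p r j = pad p r n := by
          rw [← h1, ih n (by omega) (by omega)]
        have : j = n := hinjr (Set.mem_Iic.mpr (by omega)) (Set.mem_Iic.mpr (by omega)) hrn
        rw [← h2.symm, this]
      · -- q n = r (j+1), q (n+1) = r j
        exfalso
        rcases Nat.eq_zero_or_pos n with rfl | hnpos
        · have : j+1 = 0 := hinjr (Set.mem_Iic.mpr (by omega)) (Set.mem_Iic.mpr (by omega))
            (by rw [← h1, h00])
          omega
        · obtain ⟨n', rfl⟩ : ∃ n', n = n'+1 := ⟨n-1, by omega⟩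
          have hjn : j+1 = n'+1 := hinjr (Set.mem_Iic.mpr (by omega))
            (Set.mem_Iic.mpr (by omega)) (by rw [← h1, ih (n'+1) (by omega) (by omega)])
          have hq2 : pad p q (n'+2) = pad p q n' := by
            rw [h2]
            have : j = n' := by omega
            rw [this, ← ih n' (by omega) (by omega)]
          have : n'+2 = n' := hinjq (Set.mem_Iic.mpr (by omega)) (Set.mem_Iic.mpr (by omega)) hq2
          omega
  funext j
  rw [← pad_fin p q j, ← pad_fin p r j]
  exact key j (by omega)

end PCP

open PCP

set_option linter.unusedVariables false in
/-- **Path-counting lemma.** If `G` is bipartite with bipartition `(A, B)` and the average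
degrees `d_A = e(G)/|A|` and `d_B = e(G)/|B|` are both at least `8p`, then `G` contains at
least `2^{-(6p+1)}·e(G)·(d_A·d_B)^p` paths of length `2p + 1`. -/
theorem path_count_bipartite {V : Type*} [Fintype V] (p : ℕ) (hp : 1 ≤ p)
    (G : SimpleGraph V) (A B : Set V)
    (hdisj : Disjoint A B) (hcover : A ∪ B = Set.univ)
    (hbip : ∀ u w : V, G.Adj u w → (u ∈ A ∧ w ∈ B) ∨ (u ∈ B ∧ w ∈ A))
    (hA : (8 * p : ℝ) ≤ (G.edgeSet.ncard : ℝ) / (A.ncard : ℝ))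
    (hB : (8 * p : ℝ) ≤ (G.edgeSet.ncard : ℝ) / (B.ncard : ℝ)) :
    (1 / 2 ^ (6 * p + 1) : ℝ) * (G.edgeSet.ncard : ℝ) *
        (((G.edgeSet.ncard : ℝ) / (A.ncard : ℝ)) * ((G.edgeSet.ncard : ℝ) / (B.ncard : ℝ))) ^ p ≤
      (pathCount G (2 * p + 1) : ℝ) := by
  classical
  have hp1 : (1:ℝ) ≤ (p:ℝ) := by exact_mod_cast hp
  set e : ℝ := (G.edgeSet.ncard : ℝ) with he
  set dA : ℝ := e / (A.ncard : ℝ) with hdA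
  set dB : ℝ := e / (B.ncard : ℝ) with hdB
  have hdA8 : 8 ≤ dA := by calc (8:ℝ) = 8*1 := by ring
                                _ ≤ 8*(p:ℝ) := by linarith
                                _ ≤ dA := hA
  have hdB8 : 8 ≤ dB := by calc (8:ℝ) = 8*1 := by ring
                                _ ≤ 8*(p:ℝ) := by linarith
                                _ ≤ dB := hB
  -- A, B are nonempty
  have ha0 : (A.ncard : ℝ) ≠ 0 := by
    intro h
    rw [hdA, h, div_zero] at hdA8
    linarith
  have hb0 : (B.ncard : ℝ) ≠ 0 := by
    intro h
    rw [hdB, h, div_zero] at hdB8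
    linarith
  have hdAa : dA * (A.ncard : ℝ) = e := by
    rw [hdA]; field_simp
  have hdBb : dB * (B.ncard : ℝ) = e := by
    rw [hdB]; field_simp
  have hefin : (G.edgeFinset.card : ℝ) = e := by
    rw [he, ← SimpleGraph.coe_edgeFinset, Set.ncard_coe_finset]
  obtain ⟨S, hES, hdegA, hdegB⟩ := cleaning G A B hdisj dA dB (by linarith) (by linarith)
  have hES2 : e / 2 ≤ (ES G S : ℝ) := by
    rw [hefin] at hES
    nlinarith [hES, hdAa, hdBb]
  have hiter := iterate G A B S hdisj hbip p hp dA dB hdegA hdegB hA hB p le_rfl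
  -- from paths to pathCount
  have hsub : ↑((P G A S p (2*p+1)).image (Phi p)) ⊆
      {T : Set (Sym2 V) | IsPathEdges G (2*p+1) T} := by
    intro T hT
    rw [Finset.mem_coe, Finset.mem_image] at hT
    obtain ⟨q, hq, rfl⟩ := hT
    obtain ⟨hinj, hadj, _, _, _⟩ := (mem_P _ _ _ _ _ _).mp hq
    exact ⟨pad p q, hinj, hadj, rfl⟩
  have hcard1 : ((P G A S p (2*p+1)).image (Phi p)).card ≤ pathCount G (2*p+1) := by
    unfold pathCount
    rw [← Set.ncard_coe_finset]
    exact Set.ncard_le_ncard hsub (Set.toFinite _)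
  have hcard2 : ((P G A S p (2*p+1)).image (Phi p)).card = (P G A S p (2*p+1)).card :=
    Finset.card_image_of_injOn (fun q hq r hr h =>
      phi_inj G A B S hdisj hbip p hp q r hq hr h)
  have hfinal : ((P G A S p (2*p+1)).card : ℝ) ≤ (pathCount G (2*p+1) : ℝ) := by
    exact_mod_cast hcard2 ▸ hcard1
  -- arithmetic
  have hc0 : (0:ℝ) ≤ (dA/8)*(dB/8) := by nlinarith
  have hpow : (2:ℝ)^(6*p+1) = 64^p * 2 := by
    rw [pow_succ, pow_mul]
    norm_num
  have heq1 : (1 / 2^(6*p+1) : ℝ) * e * (dA*dB)^p = (e/2) * ((dA/8)*(dB/8))^p := by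
    have h1 : ((dA/8)*(dB/8))^p = (dA*dB)^p / 64^p := by
      rw [div_mul_div_comm, div_pow]
      norm_num
    have h2 : (64:ℝ)^p ≠ 0 := by positivity
    rw [h1, hpow]
    field_simp
  calc (1 / 2 ^ (6 * p + 1) : ℝ) * e * (dA * dB) ^ p
      = (e/2) * ((dA/8)*(dB/8))^p := heq1
    _ ≤ (ES G S : ℝ) * ((dA/8)*(dB/8))^p :=
        mul_le_mul_of_nonneg_right hES2 (pow_nonneg hc0 p)
    _ ≤ ((P G A S p (2*p+1)).card : ℝ) := hiter
    _ ≤ (pathCount G (2*p+1) : ℝ) := hfinal
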